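/- If μ̄ is a finite measure (μ̄(𝒥) < ∞) and X is a Banach space, then (HK(X, μ̄), ‖·‖_𝔜) is complete: every sequence (ξ_n) in HK(X, μ̄) that is Cauchy with respect to ‖·‖_𝔜 converges in the norm ‖·‖_𝔜 to some ξ ∈ HK(X, μ̄), and moreover ∫_𝒥 ξ_n dμ̄ → ∫_𝒥 ξ dμ̄ in X. -/

import Mathlib

open MeasureTheory Filter Topology
open scoped ENNReal NNReal

/-- A tagged sub-partition of `J`: finitely many pairwise disjoint measurable sets of
finite measure, each with a tag belonging to it. -/
structure TaggedSubPartition (J : Type*) [MeasurableSpace J] (μ : MeasureTheory.Measure J) where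
  n : ℕ
  piece : Fin n → Set J
  tag : Fin n → J
  measurable : ∀ i, MeasurableSet (piece i)
  finite : ∀ i, μ (piece i) < ⊤
  disjoint : ∀ i j, i ≠ j → Disjoint (piece i) (piece j)
  tag_mem : ∀ i, tag i ∈ piece i

/-- `D'.Refines D` (written `D' ≫ D` in the paper) : every set of `D'` is contained
in some set of `D`. -/
def TaggedSubPartition.Refines {J : Type*} [MeasurableSpace J]
    {μ : MeasureTheory.Measure J} (D' D : TaggedSubPartition J μ) : Prop :=
  ∀ i, ∃ j, D'.piece i ⊆ D.piece j

/-- The Riemann sum `S(ξ, D̂) = Σ ξ(d_i) μ̄(D_i)`. -/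
noncomputable def riemannSum {J : Type*} [MeasurableSpace J] {X : Type*}
    [NormedAddCommGroup X] [NormedSpace ℝ X] (μ : MeasureTheory.Measure J)
    (ξ : J → X) (D : TaggedSubPartition J μ) : X :=
  ∑ i : Fin D.n, (μ (D.piece i)).toReal • ξ (D.tag i)

/-- `ξ` is Henstock–Kurzweil integrable with integral `I`: `I` is the limit of the net
of Riemann sums over the directed set of tagged sub-partitions ordered by refinement. -/
def HKIntegralTo {J : Type*} [MeasurableSpace J] {X : Type*}
    [NormedAddCommGroup X] [NormedSpace ℝ X] (μ : MeasureTheory.Measure J)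
    (ξ : J → X) (I : X) : Prop :=
  ∀ ε : ℝ, 0 < ε → ∃ D₀ : TaggedSubPartition J μ, ∀ D : TaggedSubPartition J μ,
    D.Refines D₀ → ‖riemannSum μ ξ D - I‖ ≤ ε

/-- `ξ ∈ HK(X, μ̄)`. -/
def HKIntegrable {J : Type*} [MeasurableSpace J] {X : Type*}
    [NormedAddCommGroup X] [NormedSpace ℝ X] (μ : MeasureTheory.Measure J)
    (ξ : J → X) : Prop :=
  ∃ I : X, HKIntegralTo μ ξ I

open Classical in
/-- The HK integral `∫_𝒥 ξ dμ̄` (an arbitrarily chosen integral value, `0` if none exists). -/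
noncomputable def HKintegral {J : Type*} [MeasurableSpace J] {X : Type*}
    [NormedAddCommGroup X] [NormedSpace ℝ X] (μ : MeasureTheory.Measure J)
    (ξ : J → X) : X :=
  if h : HKIntegrable μ ξ then h.choose else 0

/-- `‖ξ‖_𝔜 = sup {‖S(ξ, D̂)‖ : D̂ ∈ 𝔜}`, as an extended nonnegative real. -/
noncomputable def HKnormE {J : Type*} [MeasurableSpace J] {X : Type*}
    [NormedAddCommGroup X] [NormedSpace ℝ X] (μ : MeasureTheory.Measure J)
    (ξ : J → X) : ℝ≥0∞ :=
  ⨆ D : TaggedSubPartition J μ, (‖riemannSum μ ξ D‖₊ : ℝ≥0∞)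

/-- `‖ξ‖_𝔜` as a real number. -/
noncomputable def HKnorm {J : Type*} [MeasurableSpace J] {X : Type*}
    [NormedAddCommGroup X] [NormedSpace ℝ X] (μ : MeasureTheory.Measure J)
    (ξ : J → X) : ℝ :=
  (HKnormE μ ξ).toReal

section Aux

variable {J : Type*} [MeasurableSpace J] {X : Type*}
  [NormedAddCommGroup X] [NormedSpace ℝ X] {μ : MeasureTheory.Measure J}

lemma riemannSum_sub (f g : J → X) (D : TaggedSubPartition J μ) :
    riemannSum μ (f - g) D = riemannSum μ f D - riemannSum μ g D := by
  simp [riemannSum, smul_sub, Finset.sum_sub_distrib]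

/-- The empty tagged sub-partition. -/
def TaggedSubPartition.empty (μ : MeasureTheory.Measure J) : TaggedSubPartition J μ :=
  ⟨0, Fin.elim0, Fin.elim0, fun i => i.elim0, fun i => i.elim0, fun i => i.elim0,
    fun i => i.elim0⟩

lemma TaggedSubPartition.refines_self (D : TaggedSubPartition J μ) : D.Refines D :=
  fun i => ⟨i, subset_rfl⟩

lemma exists_common_refinement (D₁ D₂ : TaggedSubPartition J μ) :
    ∃ D : TaggedSubPartition J μ, D.Refines D₁ ∧ D.Refines D₂ := by
  classical
  set T := {p : Fin D₁.n × Fin D₂.n // (D₁.piece p.1 ∩ D₂.piece p.2).Nonempty} with hT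
  let e : Fin (Fintype.card T) ≃ T := (Fintype.equivFin T).symm
  refine ⟨⟨Fintype.card T,
    fun i => D₁.piece (e i).1.1 ∩ D₂.piece (e i).1.2,
    fun i => (e i).2.choose, ?_, ?_, ?_, ?_⟩, ?_, ?_⟩
  · exact fun i => ((D₁.measurable _).inter (D₂.measurable _))
  · exact fun i => lt_of_le_of_lt (measure_mono Set.inter_subset_left) (D₁.finite _)
  · intro i j hij
    have he : e i ≠ e j := fun h => hij (e.injective h)
    have hv : ((e i).1 : Fin D₁.n × Fin D₂.n) ≠ (e j).1 := fun h => he (Subtype.ext h)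
    by_cases h1 : (e i).1.1 = (e j).1.1
    · have h2 : (e i).1.2 ≠ (e j).1.2 := by
        intro h2; exact hv (Prod.ext h1 h2)
      exact ((D₂.disjoint _ _ h2).mono Set.inter_subset_right Set.inter_subset_right)
    · exact ((D₁.disjoint _ _ h1).mono Set.inter_subset_left Set.inter_subset_left)
  · exact fun i => (e i).2.choose_spec
  · exact fun i => ⟨(e i).1.1, Set.inter_subset_left⟩
  · exact fun i => ⟨(e i).1.2, Set.inter_subset_right⟩

lemma HKIntegralTo.unique {f : J → X} {I I' : X}
    (h : HKIntegralTo μ f I) (h' : HKIntegralTo μ f I') : I = I' := by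
  have key : ∀ ε : ℝ, 0 < ε → ‖I - I'‖ ≤ 2 * ε := by
    intro ε hε
    obtain ⟨D₀, hD₀⟩ := h ε hε
    obtain ⟨D₀', hD₀'⟩ := h' ε hε
    obtain ⟨D, hD1, hD2⟩ := exists_common_refinement D₀ D₀'
    have h1 := hD₀ D hD1
    have h2 := hD₀' D hD2
    have heq : I - I' = (riemannSum μ f D - I') - (riemannSum μ f D - I) := by abel
    calc ‖I - I'‖ ≤ ‖riemannSum μ f D - I'‖ + ‖riemannSum μ f D - I‖ := by
          rw [heq]; exact norm_sub_le _ _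
      _ ≤ ε + ε := add_le_add h2 h1
      _ = 2 * ε := by ring
  have h0 : ‖I - I'‖ ≤ 0 := by
    by_contra hlt
    push_neg at hlt
    have := key (‖I - I'‖ / 4) (by linarith)
    linarith
  have := norm_le_zero_iff.mp h0
  exact sub_eq_zero.mp this

lemma HKintegral_eq {f : J → X} {I : X} (h : HKIntegralTo μ f I) :
    HKintegral μ f = I := by
  have hi : HKIntegrable μ f := ⟨I, h⟩
  rw [HKintegral, dif_pos hi]
  exact hi.choose_spec.unique h

lemma norm_riemannSum_le_of_HKnormE_le {g : J → X} {ε : ℝ} (hε : 0 ≤ ε)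
    (h : HKnormE μ g ≤ ENNReal.ofReal ε) (D : TaggedSubPartition J μ) :
    ‖riemannSum μ g D‖ ≤ ε := by
  have h1 : (‖riemannSum μ g D‖₊ : ℝ≥0∞) ≤ ENNReal.ofReal ε :=
    le_trans (le_iSup (fun D => ((‖riemannSum μ g D‖₊ : ℝ≥0∞))) D) h
  have h2 := ENNReal.toReal_mono ENNReal.ofReal_ne_top h1
  simpa [ENNReal.toReal_ofReal hε] using h2

lemma HKnormE_le_ofReal {g : J → X} {ε : ℝ}
    (h : ∀ D : TaggedSubPartition J μ, ‖riemannSum μ g D‖ ≤ ε) :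
    HKnormE μ g ≤ ENNReal.ofReal ε :=
  iSup_le fun D => by
    rw [← enorm_eq_nnnorm, ← ofReal_norm]
    exact ENNReal.ofReal_le_ofReal (h D)

end Aux

/-- if `μ̄` is a finite measure and `X` a Banach space, then
`(HK(X, μ̄), ‖·‖_𝔜)` is complete, and the HK integrals of the terms of a
`‖·‖_𝔜`-Cauchy sequence converge to the HK integral of the limit. -/
theorem HK_complete {J : Type*} [MeasurableSpace J] {X : Type*}
    [NormedAddCommGroup X] [NormedSpace ℝ X] [CompleteSpace X]
    (μ : MeasureTheory.Measure J) [MeasureTheory.IsFiniteMeasure μ] (hμ : μ.IsComplete)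
    (ξ : ℕ → J → X) (hint : ∀ n, HKIntegrable μ (ξ n))
    (hcauchy : ∀ ε : ℝ, 0 < ε → ∃ N : ℕ, ∀ m n : ℕ, N ≤ m → N ≤ n →
      HKnormE μ (ξ m - ξ n) ≤ ENNReal.ofReal ε) :
    ∃ f : J → X, HKIntegrable μ f ∧
      Filter.Tendsto (fun n => HKnormE μ (ξ n - f)) Filter.atTop (nhds 0) ∧
      Filter.Tendsto (fun n => HKintegral μ (ξ n)) Filter.atTop (nhds (HKintegral μ f)) := by
  classical
  by_cases hz : (μ Set.univ).toReal = 0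
  · -- degenerate case: the whole space has measure zero, all Riemann sums vanish
    have hzero : μ Set.univ = 0 := by
      rcases ENNReal.toReal_eq_zero_iff _ |>.mp hz with h | h
      · exact h
      · exact absurd h (measure_ne_top μ _)
    have hsum : ∀ (g : J → X) (D : TaggedSubPartition J μ), riemannSum μ g D = 0 := by
      intro g D
      have hp : ∀ i, (μ (D.piece i)).toReal = 0 := by
        intro i
        have h1 : μ (D.piece i) ≤ μ Set.univ := measure_mono (Set.subset_univ _)
        rw [hzero] at h1
        simp [le_zero_iff.mp h1]
      simp [riemannSum, hp]
    have hto : ∀ g : J → X, HKIntegralTo μ g 0 := by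
      intro g ε hε
      exact ⟨TaggedSubPartition.empty μ, fun D _ => by simp [hsum, le_of_lt hε]⟩
    refine ⟨ξ 0, ⟨0, hto _⟩, ?_, ?_⟩
    · have : ∀ n, HKnormE μ (ξ n - ξ 0) = 0 := by
        intro n; simp [HKnormE, hsum]
      simpa [this] using tendsto_const_nhds (x := (0 : ℝ≥0∞)) (f := atTop (α := ℕ))
    · have h1 : ∀ n, HKintegral μ (ξ n) = 0 := fun n => HKintegral_eq (hto _)
      have h2 : HKintegral μ (ξ 0) = 0 := HKintegral_eq (hto _)
      simpa [h1, h2] using tendsto_const_nhds (x := (0 : X)) (f := atTop (α := ℕ))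
  · -- main case: positive total measure
    set c : ℝ := (μ Set.univ).toReal with hc
    have hc0 : 0 < c := lt_of_le_of_ne ENNReal.toReal_nonneg (Ne.symm hz)
    -- full-space single-piece partitions
    have hfull : ∀ j : J, ∃ D : TaggedSubPartition J μ,
        ∀ g : J → X, riemannSum μ g D = c • g j := by
      intro j
      refine ⟨⟨1, fun _ => Set.univ, fun _ => j, fun _ => MeasurableSet.univ,
        fun _ => measure_lt_top μ _, fun i k hik => absurd (Subsingleton.elim i k) hik,
        fun _ => Set.mem_univ j⟩, fun g => ?_⟩
      simp [riemannSum, hc]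
    -- pointwise uniform Cauchy estimate
    have hpt : ∀ ε : ℝ, 0 < ε → ∃ N : ℕ, ∀ m n : ℕ, N ≤ m → N ≤ n → ∀ j : J,
        ‖ξ m j - ξ n j‖ ≤ ε / c := by
      intro ε hε
      obtain ⟨N, hN⟩ := hcauchy ε hε
      refine ⟨N, fun m n hm hn j => ?_⟩
      obtain ⟨D, hD⟩ := hfull j
      have h1 : ‖riemannSum μ (ξ m - ξ n) D‖ ≤ ε :=
        norm_riemannSum_le_of_HKnormE_le (le_of_lt hε) (hN m n hm hn) D
      rw [hD] at h1
      have h2 : ‖(ξ m - ξ n) j‖ ≤ ε / c := by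
        rw [norm_smul, Real.norm_eq_abs, abs_of_pos hc0] at h1
        rw [le_div_iff₀ hc0]
        linarith [h1]
      simpa using h2
    -- pointwise convergence
    have hconv : ∀ j : J, ∃ x : X, Tendsto (fun n => ξ n j) atTop (𝓝 x) := by
      intro j
      apply cauchySeq_tendsto_of_complete
      rw [Metric.cauchySeq_iff]
      intro ε hε
      obtain ⟨N, hN⟩ := hpt (ε * c / 2) (by positivity)
      refine ⟨N, fun m hm n hn => ?_⟩
      have := hN m n hm hn j
      rw [dist_eq_norm]
      have : ‖ξ m j - ξ n j‖ ≤ ε / 2 := by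
        have h2 : ε * c / 2 / c = ε / 2 := by field_simp
        rw [h2] at this; exact this
      linarith
    set f : J → X := fun j => (hconv j).choose with hf
    have hflim : ∀ j, Tendsto (fun n => ξ n j) atTop (𝓝 (f j)) :=
      fun j => (hconv j).choose_spec
    -- Riemann sums of ξ n converge to those of f
    have hRlim : ∀ D : TaggedSubPartition J μ,
        Tendsto (fun n => riemannSum μ (ξ n) D) atTop (𝓝 (riemannSum μ f D)) := by
      intro D
      unfold riemannSum
      exact tendsto_finset_sum _ fun i _ => (hflim (D.tag i)).const_smul _
    -- key uniform estimate against f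
    have key : ∀ ε : ℝ, 0 < ε → ∃ N : ℕ, ∀ m : ℕ, N ≤ m →
        ∀ D : TaggedSubPartition J μ, ‖riemannSum μ (ξ m - f) D‖ ≤ ε := by
      intro ε hε
      obtain ⟨N, hN⟩ := hcauchy ε hε
      refine ⟨N, fun m hm D => ?_⟩
      rw [riemannSum_sub]
      have hlim : Tendsto (fun n => ‖riemannSum μ (ξ m) D - riemannSum μ (ξ n) D‖)
          atTop (𝓝 ‖riemannSum μ (ξ m) D - riemannSum μ f D‖) :=
        (Filter.Tendsto.sub tendsto_const_nhds (hRlim D)).norm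
      refine le_of_tendsto hlim (Filter.eventually_atTop.mpr ⟨N, fun n hn => ?_⟩)
      have h1 : ‖riemannSum μ (ξ m - ξ n) D‖ ≤ ε :=
        norm_riemannSum_le_of_HKnormE_le (le_of_lt hε) (hN m n hm hn) D
      rwa [riemannSum_sub] at h1
    -- the integrals form a Cauchy sequence
    have hIcauchy : CauchySeq (fun n => (hint n).choose) := by
      rw [Metric.cauchySeq_iff]
      intro ε hε
      obtain ⟨N, hN⟩ := hcauchy (ε / 4) (by linarith)
      refine ⟨N, fun m hm n hn => ?_⟩
      obtain ⟨D₀m, hD₀m⟩ := (hint m).choose_spec (ε / 4) (by linarith)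
      obtain ⟨D₀n, hD₀n⟩ := (hint n).choose_spec (ε / 4) (by linarith)
      obtain ⟨D, hD1, hD2⟩ := exists_common_refinement D₀m D₀n
      have h1 := hD₀m D hD1
      have h2 := hD₀n D hD2
      have h3 : ‖riemannSum μ (ξ m) D - riemannSum μ (ξ n) D‖ ≤ ε / 4 := by
        have := norm_riemannSum_le_of_HKnormE_le (by linarith : (0:ℝ) ≤ ε / 4)
          (hN m n hm hn) D
        rwa [riemannSum_sub] at this
      rw [dist_eq_norm]
      have heq : (hint m).choose - (hint n).choose =
          ((hint m).choose - riemannSum μ (ξ m) D) +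
          (riemannSum μ (ξ m) D - riemannSum μ (ξ n) D) +
          (riemannSum μ (ξ n) D - (hint n).choose) := by abel
      calc ‖(hint m).choose - (hint n).choose‖
          ≤ ‖(hint m).choose - riemannSum μ (ξ m) D‖ +
            ‖riemannSum μ (ξ m) D - riemannSum μ (ξ n) D‖ +
            ‖riemannSum μ (ξ n) D - (hint n).choose‖ := by
            rw [heq]; exact norm_add₃_le
        _ ≤ ε / 4 + ε / 4 + ε / 4 := by
            refine add_le_add (add_le_add ?_ h3) ?_
            · rw [norm_sub_rev]; exact h1
            · exact h2
        _ < ε := by linarith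
    obtain ⟨I, hI⟩ := cauchySeq_tendsto_of_complete hIcauchy
    -- f is HK integrable with integral I
    have hfI : HKIntegralTo μ f I := by
      intro ε hε
      obtain ⟨N₁, hN₁⟩ := key (ε / 3) (by linarith)
      obtain ⟨N₂, hN₂⟩ := (Metric.tendsto_atTop.mp hI) (ε / 3) (by linarith)
      set M := max N₁ N₂ with hM
      obtain ⟨D₀, hD₀⟩ := (hint M).choose_spec (ε / 3) (by linarith)
      refine ⟨D₀, fun D hD => ?_⟩
      have h1 : ‖riemannSum μ (ξ M - f) D‖ ≤ ε / 3 := hN₁ M (le_max_left _ _) D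
      rw [riemannSum_sub] at h1
      have h2 : ‖riemannSum μ (ξ M) D - (hint M).choose‖ ≤ ε / 3 := hD₀ D hD
      have h3 : ‖(hint M).choose - I‖ ≤ ε / 3 := by
        have := hN₂ M (le_max_right _ _)
        rw [dist_eq_norm] at this
        linarith
      have heq : riemannSum μ f D - I =
          -(riemannSum μ (ξ M) D - riemannSum μ f D) +
          (riemannSum μ (ξ M) D - (hint M).choose) +
          ((hint M).choose - I) := by abel
      calc ‖riemannSum μ f D - I‖
          ≤ ‖-(riemannSum μ (ξ M) D - riemannSum μ f D)‖ +
            ‖riemannSum μ (ξ M) D - (hint M).choose‖ +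
            ‖(hint M).choose - I‖ := by rw [heq]; exact norm_add₃_le
        _ ≤ ε / 3 + ε / 3 + ε / 3 := by
            refine add_le_add (add_le_add ?_ h2) h3
            rw [norm_neg]; exact h1
        _ = ε := by ring
    refine ⟨f, ⟨I, hfI⟩, ?_, ?_⟩
    · -- HKnormE μ (ξ n - f) → 0
      rw [ENNReal.tendsto_nhds_zero]
      intro ε' hε'
      obtain ⟨r, hr0, hrε⟩ : ∃ r : ℝ, 0 < r ∧ ENNReal.ofReal r ≤ ε' := by
        by_cases hT : ε' = ⊤
        · exact ⟨1, one_pos, by simp [hT]⟩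
        · refine ⟨ε'.toReal, ?_, ?_⟩
          · exact ENNReal.toReal_pos (ne_of_gt hε') hT
          · rw [ENNReal.ofReal_toReal hT]
      obtain ⟨N, hN⟩ := key r hr0
      refine Filter.eventually_atTop.mpr ⟨N, fun n hn => ?_⟩
      exact le_trans (HKnormE_le_ofReal (hN n hn)) hrε
    · -- integrals converge
      have h1 : ∀ n, HKintegral μ (ξ n) = (hint n).choose :=
        fun n => HKintegral_eq (hint n).choose_spec
      have h2 : HKintegral μ f = I := HKintegral_eq hfI
      simpa [h1, h2] using hI
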